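/- Let F be a field of characteristic 2. If a, b, c, d, α, β, γ, δ ∈ F× and x, y ∈ F are not both zero, and we set λ = x² + αγy², then λ ≠ 0 implies {α, β}₂ + {γ, δ}₂ = {α, λβ}₂ + {γ, λδ}₂ in K₂(F)/2K₂(F). -/

import Mathlib

namespace Milnor

variable (F : Type*) [Field F]

/-- Relations defining the Milnor K-group `K_n(F)`: multiplicativity in each
slot and the Steinberg relation. -/
def rels (n : ℕ) : AddSubgroup (FreeAbelianGroup (Fin n → Fˣ)) :=
  AddSubgroup.closure
    ({ x | ∃ (i : Fin n) (u v w : Fin n → Fˣ),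
        (∀ j, j ≠ i → u j = v j ∧ u j = w j) ∧ w i = u i * v i ∧
        x = FreeAbelianGroup.of w - FreeAbelianGroup.of u - FreeAbelianGroup.of v } ∪
     { x | ∃ (i j : Fin n) (u : Fin n → Fˣ), i ≠ j ∧ (u i : F) + (u j : F) = 1 ∧
        x = FreeAbelianGroup.of u })

/-- The Milnor K-group `K_n(F)`. -/
def K (n : ℕ) := FreeAbelianGroup (Fin n → Fˣ) ⧸ rels F n

instance (n : ℕ) : AddCommGroup (K F n) :=
  QuotientAddGroup.Quotient.addCommGroup _

/-- The subgroup `2^m K_n(F)` of `K_n(F)`. -/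
def modSub (n m : ℕ) : AddSubgroup (K F n) :=
  AddSubgroup.closure { x | ∃ y : K F n, x = (2 ^ m) • y }

/-- The quotient `K_n(F)/2^m K_n(F)`. -/
def KMod (n m : ℕ) := K F n ⧸ modSub F n m

instance (n m : ℕ) : AddCommGroup (KMod F n m) :=
  QuotientAddGroup.Quotient.addCommGroup _

variable {F}

/-- The class of the symbol `{v 0, …, v (n-1)}` in `K_n(F)/2^m K_n(F)`. -/
def symbol {n : ℕ} (m : ℕ) (v : Fin n → Fˣ) : KMod F n m :=
  QuotientAddGroup.mk (QuotientAddGroup.mk (FreeAbelianGroup.of v) : K F n)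

open scoped Classical in
/-- `{a,b}` in `K₂(F)/2^m K₂(F)` for field elements, with junk value `0` if an
entry vanishes.  So `s2 1 a b` is `{a,b}₂` and `s2 2 a b` is `{a,b}₄`. -/
noncomputable def s2 (m : ℕ) (a b : F) : KMod F 2 m :=
  if h : a ≠ 0 ∧ b ≠ 0 then symbol m ![Units.mk0 a h.1, Units.mk0 b h.2] else 0

open scoped Classical in
/-- `{a,b,c,d}` in `K₄(F)/2^m K₄(F)` for field elements, junk value `0`. -/
noncomputable def s4 (m : ℕ) (a b c d : F) : KMod F 4 m :=
  if h : a ≠ 0 ∧ b ≠ 0 ∧ c ≠ 0 ∧ d ≠ 0 then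
    symbol m ![Units.mk0 a h.1, Units.mk0 b h.2.1, Units.mk0 c h.2.2.1, Units.mk0 d h.2.2.2]
  else 0

end Milnor

open Milnor

section Aux

variable {F : Type*} [Field F]

lemma symbol_mul_left (m : ℕ) (a b c : Fˣ) :
    symbol (F := F) m ![a * b, c] = symbol m ![a, c] + symbol m ![b, c] := by
  have h1 : (QuotientAddGroup.mk (FreeAbelianGroup.of ![a * b, c]
      - FreeAbelianGroup.of ![a, c] - FreeAbelianGroup.of ![b, c]) : K F 2) = 0 := by
    rw [QuotientAddGroup.eq_zero_iff]
    apply AddSubgroup.subset_closure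
    left
    refine ⟨0, ![a, c], ![b, c], ![a * b, c], ?_, by simp, rfl⟩
    intro j hj
    fin_cases j
    · exact absurd rfl hj
    · simp
  have h2 : (QuotientAddGroup.mk (FreeAbelianGroup.of ![a * b, c]) : K F 2)
      = QuotientAddGroup.mk (FreeAbelianGroup.of ![a, c])
        + QuotientAddGroup.mk (FreeAbelianGroup.of ![b, c]) := by
    rw [QuotientAddGroup.mk_sub, QuotientAddGroup.mk_sub] at h1
    rw [sub_sub, sub_eq_zero] at h1
    exact h1
  unfold symbol
  rw [h2]; rfl

lemma symbol_mul_right (m : ℕ) (a b c : Fˣ) :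
    symbol (F := F) m ![a, b * c] = symbol m ![a, b] + symbol m ![a, c] := by
  have h1 : (QuotientAddGroup.mk (FreeAbelianGroup.of ![a, b * c]
      - FreeAbelianGroup.of ![a, b] - FreeAbelianGroup.of ![a, c]) : K F 2) = 0 := by
    rw [QuotientAddGroup.eq_zero_iff]
    apply AddSubgroup.subset_closure
    left
    refine ⟨1, ![a, b], ![a, c], ![a, b * c], ?_, by simp, rfl⟩
    intro j hj
    fin_cases j
    · simp
    · exact absurd rfl hj
  have h2 : (QuotientAddGroup.mk (FreeAbelianGroup.of ![a, b * c]) : K F 2)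
      = QuotientAddGroup.mk (FreeAbelianGroup.of ![a, b])
        + QuotientAddGroup.mk (FreeAbelianGroup.of ![a, c]) := by
    rw [QuotientAddGroup.mk_sub, QuotientAddGroup.mk_sub] at h1
    rw [sub_sub, sub_eq_zero] at h1
    exact h1
  unfold symbol
  rw [h2]; rfl

lemma symbol_steinberg (m : ℕ) (a b : Fˣ) (h : (a : F) + b = 1) :
    symbol (F := F) m ![a, b] = 0 := by
  have h1 : (QuotientAddGroup.mk (FreeAbelianGroup.of ![a, b]) : K F 2) = 0 := by
    rw [QuotientAddGroup.eq_zero_iff]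
    apply AddSubgroup.subset_closure
    right
    exact ⟨0, 1, ![a, b], by decide, by simpa using h, rfl⟩
  unfold symbol
  rw [h1]; rfl

lemma two_smul_kmod (z : KMod F 2 1) : z + z = 0 := by
  induction z using QuotientAddGroup.induction_on with
  | H y =>
    change (QuotientAddGroup.mk (s := modSub F 2 1) (y + y) : K F 2 ⧸ modSub F 2 1) = 0
    rw [QuotientAddGroup.eq_zero_iff]
    apply AddSubgroup.subset_closure
    exact ⟨y, by rw [pow_one, two_smul]⟩

lemma s2_def (m : ℕ) {a b : F} (ha : a ≠ 0) (hb : b ≠ 0) :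
    s2 m a b = symbol m ![Units.mk0 a ha, Units.mk0 b hb] := by
  rw [s2, dif_pos ⟨ha, hb⟩]

lemma s2_mul_left (m : ℕ) {a b c : F} (ha : a ≠ 0) (hb : b ≠ 0) (hc : c ≠ 0) :
    s2 m (a * b) c = s2 m a c + s2 m b c := by
  rw [s2_def m (mul_ne_zero ha hb) hc, s2_def m ha hc, s2_def m hb hc,
    Units.mk0_mul, symbol_mul_left]

lemma s2_mul_right (m : ℕ) {a b c : F} (ha : a ≠ 0) (hb : b ≠ 0) (hc : c ≠ 0) :
    s2 m a (b * c) = s2 m a b + s2 m a c := by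
  rw [s2_def m ha (mul_ne_zero hb hc), s2_def m ha hb, s2_def m ha hc,
    Units.mk0_mul, symbol_mul_right]

lemma s2_one_left (m : ℕ) {c : F} (hc : c ≠ 0) : s2 m (1 : F) c = 0 := by
  have h := s2_mul_left m (F := F) one_ne_zero one_ne_zero hc
  rw [mul_one] at h
  have := sub_eq_zero.mpr h
  rw [sub_add_eq_sub_sub, sub_self, zero_sub, neg_eq_zero] at this
  exact this

lemma s2_one_right (m : ℕ) {a : F} (ha : a ≠ 0) : s2 m a (1 : F) = 0 := by
  have h := s2_mul_right m (F := F) ha one_ne_zero one_ne_zero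
  rw [mul_one] at h
  have := sub_eq_zero.mpr h
  rw [sub_add_eq_sub_sub, sub_self, zero_sub, neg_eq_zero] at this
  exact this

lemma s2_inv_left (m : ℕ) {a c : F} (ha : a ≠ 0) (hc : c ≠ 0) :
    s2 m a⁻¹ c = - s2 m a c := by
  have h := s2_mul_left m (inv_ne_zero ha) ha hc
  rw [inv_mul_cancel₀ ha, s2_one_left m hc] at h
  exact eq_neg_of_add_eq_zero_left h.symm

lemma s2_inv_right (m : ℕ) {a c : F} (ha : a ≠ 0) (hc : c ≠ 0) :
    s2 m a c⁻¹ = - s2 m a c := by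
  have h := s2_mul_right m ha (inv_ne_zero hc) hc
  rw [inv_mul_cancel₀ hc, s2_one_right m ha] at h
  exact eq_neg_of_add_eq_zero_left h.symm

lemma s2_steinberg (m : ℕ) {a : F} (ha : a ≠ 0) (ha' : 1 - a ≠ 0) :
    s2 m a (1 - a) = 0 := by
  rw [s2_def m ha ha']
  exact symbol_steinberg m _ _ (by simp)

lemma s2_self (m : ℕ) [CharP F 2] {a : F} (ha : a ≠ 0) : s2 m a a = 0 := by
  by_cases h1 : a = 1
  · rw [h1]; exact s2_one_left m one_ne_zero
  · have h1a : (1 : F) - a ≠ 0 := sub_ne_zero.mpr (Ne.symm h1)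
    have hinv : a⁻¹ ≠ 1 := by
      intro h; exact h1 (by rw [← inv_inv a, h, inv_one])
    have h1ai : (1 : F) - a⁻¹ ≠ 0 := sub_ne_zero.mpr (Ne.symm hinv)
    have key : a = (1 - a) * (1 - a⁻¹)⁻¹ := by
      rw [← div_eq_mul_inv, eq_div_iff h1ai, mul_sub, mul_one,
        mul_inv_cancel₀ ha, CharTwo.sub_eq_add, CharTwo.sub_eq_add, add_comm]
    have e1 : s2 m a (1 - a⁻¹) = 0 := by
      have h2 := s2_inv_left m ha h1ai
      rw [s2_steinberg m (inv_ne_zero ha) h1ai] at h2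
      exact neg_eq_zero.mp h2.symm
    nth_rewrite 2 [key]
    rw [s2_mul_right m ha h1a (inv_ne_zero h1ai), s2_steinberg m ha h1a,
      s2_inv_right m ha h1ai, e1, neg_zero, add_zero]

lemma s2_sq_right {a c : F} (ha : a ≠ 0) (hc : c ≠ 0) :
    s2 (F := F) 1 a (c ^ 2) = 0 := by
  rw [sq, s2_mul_right 1 ha hc hc]
  exact two_smul_kmod _

lemma s2_sq_left {a c : F} (ha : a ≠ 0) (hc : c ≠ 0) :
    s2 (F := F) 1 (a ^ 2) c = 0 := by
  rw [sq, s2_mul_left 1 ha ha hc]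
  exact two_smul_kmod _

lemma key_lemma [CharP F 2] {s lam x y : F} (hs : s ≠ 0)
    (hxy : ¬ (x = 0 ∧ y = 0)) (hlam : lam ≠ 0) (h : lam = x ^ 2 + s * y ^ 2) :
    s2 (F := F) 1 s lam = 0 := by
  by_cases hy : y = 0
  · have hx : x ≠ 0 := fun hx => hxy ⟨hx, hy⟩
    rw [h, hy]
    simpa using s2_sq_right hs hx
  · set t : F := x / y with ht
    have hμ : lam = y ^ 2 * (t ^ 2 + s) := by
      rw [h, ht]; field_simp
    have hμ0 : t ^ 2 + s ≠ 0 := by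
      intro h0
      apply hlam
      rw [hμ, h0, mul_zero]
    have hstep : s2 (F := F) 1 s lam = s2 1 s (t ^ 2 + s) := by
      rw [hμ, s2_mul_right 1 hs (pow_ne_zero 2 hy) hμ0, s2_sq_right hs hy, zero_add]
    rw [hstep]
    by_cases hx : x = 0
    · have heq : t ^ 2 + s = s := by rw [ht, hx]; simp
      rw [heq]
      exact s2_self 1 hs
    · have htne : t ≠ 0 := div_ne_zero hx hy
      set u : F := s / t ^ 2 with hu
      have hune : u ≠ 0 := div_ne_zero hs (pow_ne_zero 2 htne)
      have hfact : t ^ 2 + s = t ^ 2 * (1 + u) := by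
        rw [hu]; field_simp
      have h1u : (1 : F) + u ≠ 0 := by
        intro h0
        apply hμ0
        rw [hfact, h0, mul_zero]
      have hsu : s = u * t ^ 2 := by rw [hu]; field_simp
      have h1u' : (1 : F) + u = 1 - u := by
        rw [CharTwo.sub_eq_add]
      calc s2 (F := F) 1 s (t ^ 2 + s)
          = s2 1 s (t ^ 2) + s2 1 s (1 + u) := by
            rw [hfact]
            exact s2_mul_right 1 hs (pow_ne_zero 2 htne) h1u
        _ = s2 1 s (1 + u) := by rw [s2_sq_right hs htne, zero_add]
        _ = s2 1 u (1 + u) + s2 1 (t ^ 2) (1 + u) := by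
            rw [← s2_mul_left 1 hune (pow_ne_zero 2 htne) h1u, ← hsu]
        _ = s2 1 u (1 - u) := by
            rw [s2_sq_left htne h1u, add_zero, h1u']
        _ = 0 := s2_steinberg 1 hune (by rw [← h1u']; exact h1u)

end Aux


/-- for `λ = x² + αγy² ≠ 0` (with `x, y` not both zero),
`{α,β}₂ + {γ,δ}₂ = {α,λβ}₂ + {γ,λδ}₂`. -/
theorem stmt0 (F : Type*) [Field F] [CharP F 2] (a b c d α β γ δ x y : F)
    (ha : a ≠ 0) (hb : b ≠ 0) (hc : c ≠ 0) (hd : d ≠ 0)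
    (hα : α ≠ 0) (hβ : β ≠ 0) (hγ : γ ≠ 0) (hδ : δ ≠ 0)
    (hxy : ¬ (x = 0 ∧ y = 0))
    (hlam : x ^ 2 + α * γ * y ^ 2 ≠ 0) :
    s2 1 α β + s2 1 γ δ =
      s2 1 α ((x ^ 2 + α * γ * y ^ 2) * β) + s2 1 γ ((x ^ 2 + α * γ * y ^ 2) * δ) := by
  set lam : F := x ^ 2 + α * γ * y ^ 2 with hlamdef
  have key : s2 1 α lam + s2 1 γ lam = 0 := by
    have k := key_lemma (mul_ne_zero hα hγ) hxy hlam hlamdef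
    rwa [s2_mul_left 1 hα hγ hlam] at k
  have expand : s2 1 α (lam * β) + s2 1 γ (lam * δ)
      = (s2 1 α lam + s2 1 γ lam) + (s2 1 α β + s2 1 γ δ) := by
    rw [s2_mul_right 1 hα hlam hβ, s2_mul_right 1 hγ hlam hδ]
    abel
  rw [expand, key, zero_add]
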